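/- Let G(k,γ) be the graph obtained from a spherically symmetric rooted tree T(k) with branching sequence k ∈ ℕ^ℕ by adding, for each n with γ_n = 1, all edges between pairs of vertices in the sphere S_n. Then G(k,γ) is family preserving. -/

import Mathlib

open SimpleGraph Matrix

attribute [local instance] Classical.propDecidable

/-- A rooted graph: connected, locally finite simple graph with a distinguished root.
The finiteness of spheres is a consequence of connectedness and local finiteness,
recorded here as a field for convenience. -/
structure RootedGraph (V : Type*) where
  G : SimpleGraph V
  o : V
  connected : G.Connected
  locFin : ∀ v : V, (G.neighborSet v).Finite
  sphereFin : ∀ n : ℕ, {v : V | G.dist o v = n}.Finite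

namespace RootedGraph

variable {V : Type*} (R : RootedGraph V)

/-- The sphere of radius `n` around the root. -/
def sphere (n : ℕ) : Set V := {v : V | R.G.dist R.o v = n}

noncomputable instance (n : ℕ) : Fintype ↥(R.sphere n) := (R.sphereFin n).fintype

/-- A k-forward path from `x` to `y` (both in sphere `n`): a path of length `2k`
going up `k` spheres and then back down, encoded as a function `ℕ → V`
that is constantly `y` from index `2k` on. -/
def IsForwardPath (n k : ℕ) (x y : V) (p : ℕ → V) : Prop :=
  p 0 = x ∧ (∀ j, 2*k ≤ j → p j = y) ∧
  (∀ j, j < 2*k → R.G.Adj (p j) (p (j+1))) ∧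
  (∀ j, j ≤ k → p j ∈ R.sphere (n + j)) ∧
  (∀ j, k ≤ j → j ≤ 2*k → p j ∈ R.sphere (n + (2*k - j)))

/-- A k-backward path from `x` to `y` (both in sphere `n`): a path of length `2k`
going down `k` spheres (so `k ≤ n`) and then back up. -/
def IsBackwardPath (n k : ℕ) (x y : V) (p : ℕ → V) : Prop :=
  k ≤ n ∧ p 0 = x ∧ (∀ j, 2*k ≤ j → p j = y) ∧
  (∀ j, j < 2*k → R.G.Adj (p j) (p (j+1))) ∧
  (∀ j, j ≤ k → p j ∈ R.sphere (n - j)) ∧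
  (∀ j, k ≤ j → j ≤ 2*k → p j ∈ R.sphere (n - (2*k - j)))

/-- Number of (k,ℓ)-forward-backward paths from `x` to `y`. -/
noncomputable def fbCount (n k l : ℕ) (x y : V) : ℕ :=
  Nat.card {pq : (ℕ → V) × (ℕ → V) //
    R.IsForwardPath n k x (pq.1 (2*k)) pq.1 ∧
    R.IsBackwardPath n l (pq.1 (2*k)) y pq.2}

/-- Number of (ℓ,k)-backward-forward paths from `x` to `y`. -/
noncomputable def bfCount (n l k : ℕ) (x y : V) : ℕ :=
  Nat.card {pq : (ℕ → V) × (ℕ → V) //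
    R.IsBackwardPath n l x (pq.1 (2*l)) pq.1 ∧
    R.IsForwardPath n k (pq.1 (2*l)) y pq.2}

/-- Number of tailed-k-forward paths from `x` to `y`. -/
noncomputable def tailedFCount (n k : ℕ) (x y : V) : ℕ :=
  Nat.card {p : ℕ → V // R.IsForwardPath n k x (p (2*k)) p ∧ R.G.Adj (p (2*k)) y}

/-- Number of headed-k-forward paths from `x` to `y`. -/
noncomputable def headedFCount (n k : ℕ) (x y : V) : ℕ :=
  Nat.card {p : ℕ → V // R.G.Adj x (p 0) ∧ R.IsForwardPath n k (p 0) y p}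

/-- Number of tailed-k-backward paths from `x` to `y`. -/
noncomputable def tailedBCount (n k : ℕ) (x y : V) : ℕ :=
  Nat.card {p : ℕ → V // R.IsBackwardPath n k x (p (2*k)) p ∧ R.G.Adj (p (2*k)) y}

/-- Number of headed-k-backward paths from `x` to `y`. -/
noncomputable def headedBCount (n k : ℕ) (x y : V) : ℕ :=
  Nat.card {p : ℕ → V // R.G.Adj x (p 0) ∧ R.IsBackwardPath n k (p 0) y p}

/-- Path commuting rooted graph. -/
def PathCommuting : Prop :=
  ∀ n : ℕ, ∀ x ∈ R.sphere n, ∀ y ∈ R.sphere n, ∀ k l : ℕ,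
    R.fbCount n k l x y = R.bfCount n l k x y ∧
    R.tailedFCount n k x y = R.headedFCount n k x y ∧
    R.tailedBCount n k x y = R.headedBCount n k x y

/-- Family preserving rooted graph. -/
def FamilyPreserving : Prop :=
  (∀ n : ℕ, ∀ x ∈ R.sphere n, ∀ y ∈ R.sphere n, ∀ z ∈ R.sphere (n+1),
    R.G.Adj x z → R.G.Adj y z →
    ∃ τ : R.G ≃g R.G, τ R.o = R.o ∧ τ x = y ∧
      ∀ j : ℕ, 1 ≤ j → ∀ v ∈ R.sphere (n+j), τ v = v) ∧
  (∀ n : ℕ, 1 ≤ n → ∀ x ∈ R.sphere n, ∀ y ∈ R.sphere n, ∀ z ∈ R.sphere (n-1),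
    R.G.Adj x z → R.G.Adj y z →
    ∃ τ : R.G ≃g R.G, τ R.o = R.o ∧ τ x = y ∧
      ∀ j : ℕ, 1 ≤ j → j ≤ n → ∀ v ∈ R.sphere (n-j), τ v = v) ∧
  (∀ n : ℕ, ∀ x ∈ R.sphere n, ∀ y ∈ R.sphere n, R.G.Adj x y →
    ∃ γ : R.G ≃g R.G, γ R.o = R.o ∧ γ x = y ∧ γ y = x)

/-- The 0-1 edge matrix between spheres `j` and `j+1`. -/
noncomputable def Esub (j : ℕ) : Matrix ↥(R.sphere (j+1)) ↥(R.sphere j) ℕ :=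
  fun u v => if R.G.Adj u.1 v.1 then 1 else 0

/-- The adjacency matrix of the subgraph induced on sphere `n`. -/
noncomputable def Vsub (n : ℕ) : Matrix ↥(R.sphere n) ↥(R.sphere n) ℕ :=
  fun u v => if R.G.Adj u.1 v.1 then 1 else 0

/-- The product `E_{m+l-1} ⋯ E_{m+1} E_m` of edge matrices (identity for `l = 0`). -/
noncomputable def chainProd (m : ℕ) : (l : ℕ) → Matrix ↥(R.sphere (m + l)) ↥(R.sphere m) ℕ
  | 0 => (1 : Matrix ↥(R.sphere m) ↥(R.sphere m) ℕ)
  | l+1 => R.Esub (m+l) * chainProd m l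

/-- `Λ_{n,+k} = E_n^T ⋯ E_{n+k-1}^T E_{n+k-1} ⋯ E_n`, which counts `k`-forward paths. -/
noncomputable def lamPlus (n k : ℕ) : Matrix ↥(R.sphere n) ↥(R.sphere n) ℕ :=
  (R.chainProd n k)ᵀ * R.chainProd n k

/-- `Λ_{m+l,-l} = E_{m+l-1} ⋯ E_m E_m^T ⋯ E_{m+l-1}^T`, which counts `l`-backward paths. -/
noncomputable def lamMinus (m l : ℕ) : Matrix ↥(R.sphere (m + l)) ↥(R.sphere (m + l)) ℕ :=
  R.chainProd m l * (R.chainProd m l)ᵀ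

/-- `Λ_{n,-j}`, defined as the identity when `j > n`. -/
noncomputable def lamMinusAll : (n j : ℕ) → Matrix ↥(R.sphere n) ↥(R.sphere n) ℕ
  | _, 0 => 1
  | 0, _+1 => 1
  | n+1, j+1 => if j + 1 ≤ n + 1 then R.Esub n * lamMinusAll n j * (R.Esub n)ᵀ else 1

/-- The graph Laplacian acting on real-valued functions. -/
noncomputable def lap (φ : V → ℝ) (x : V) : ℝ :=
  ∑ᶠ y ∈ R.G.neighborSet x, (φ x - φ y)

/-- An antitree: two vertices are adjacent iff their distances to the root differ by one. -/
def IsAntitree : Prop :=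
  ∀ x y : V, R.G.Adj x y ↔
    (R.G.dist R.o x + 1 = R.G.dist R.o y ∨ R.G.dist R.o y + 1 = R.G.dist R.o x)

/-- The set `Z^{k,ℓ}_{x,y}` of vertices in sphere `n` reachable from `x` by a `k`-forward
path and from `y` by an `ℓ`-backward path. -/
def Zset (n k l : ℕ) (x y : V) : Set V :=
  {z | z ∈ R.sphere n ∧ (∃ p, R.IsForwardPath n k x z p) ∧ (∃ q, R.IsBackwardPath n l y z q)}

end RootedGraph

namespace Stmt7Aux

open SimpleGraph

variable {V : Type*}

/-- parent function -/
noncomputable def par (G : SimpleGraph V) (o : V) (v : V) : V :=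
  if h : ∃ u, G.Adj u v ∧ G.dist o u + 1 = G.dist o v then h.choose else v

/-- children set -/
def ch (G : SimpleGraph V) (o : V) (v : V) : Set V :=
  {w | G.Adj v w ∧ G.dist o w = G.dist o v + 1}

lemma mem_ch_iff {G : SimpleGraph V} {o v w : V} :
    w ∈ ch G o v ↔ G.Adj v w ∧ G.dist o w = G.dist o v + 1 := Iff.rfl

section Tree

variable {G : SimpleGraph V} {o : V}

lemma dist0 (hconn : G.Connected) {v : V} (h : G.dist o v = 0) : v = o :=
  ((hconn.dist_eq_zero_iff).1 h).symm

lemma path_length_eq (hconn : G.Connected) (hac : G.IsAcyclic) {v w : V}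
    (p : G.Walk v w) (hp : p.IsPath) : p.length = G.dist v w := by
  have htree : G.IsTree := ⟨hconn, hac⟩
  obtain ⟨q, hq⟩ := hconn.exists_walk_length_eq_dist v w
  have h1 : p = q.bypass := by
    obtain ⟨r, -, hr⟩ := htree.existsUnique_path v w
    rw [hr p hp, hr q.bypass q.bypass_isPath]
  refine le_antisymm ?_ (G.dist_le p)
  calc p.length = q.bypass.length := by rw [h1]
    _ ≤ q.length := q.length_bypass_le
    _ = G.dist v w := hq

lemma dist_le_succ_of_adj (hconn : G.Connected) {u v : V} (h : G.Adj u v) :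
    G.dist o v ≤ G.dist o u + 1 := by
  obtain ⟨p, hp⟩ := hconn.exists_walk_length_eq_dist o u
  have := G.dist_le (p.concat h)
  rwa [SimpleGraph.Walk.length_concat, hp] at this

lemma concat_isPath {u v w : V} {p : G.Walk u v} (hp : p.IsPath) (h : G.Adj v w)
    (hw : w ∉ p.support) : (p.concat h).IsPath := by
  rw [SimpleGraph.Walk.isPath_def, SimpleGraph.Walk.support_concat]
  rw [SimpleGraph.Walk.isPath_def] at hp
  simp [List.concat_eq_append, List.nodup_append, hp, hw]
  exact fun a ha hc => hw (hc ▸ ha)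

/-- no adjacent vertices at equal distance from the root in a tree -/
lemma no_lateral (hconn : G.Connected) (hac : G.IsAcyclic) {u v : V} (h : G.Adj u v)
    (hd : G.dist o u = G.dist o v) : False := by
  obtain ⟨p0, hp0⟩ := hconn.exists_walk_length_eq_dist o u
  set p := p0.bypass with hpdef
  have hp : p.IsPath := p0.bypass_isPath
  have hplen : p.length = G.dist o u := path_length_eq hconn hac p hp
  have hv : v ∉ p.support := by
    intro hv
    have h1 : (p.takeUntil v hv).length = G.dist o v :=
      path_length_eq hconn hac _ (hp.takeUntil hv)
    have h2 := SimpleGraph.Walk.length_takeUntil_le p hv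
    have h3 := SimpleGraph.Walk.take_spec p hv
    have h4 : (p.takeUntil v hv).length + (p.dropUntil v hv).length = p.length := by
      rw [← SimpleGraph.Walk.length_append, h3]
    have h5 : (p.dropUntil v hv).length = 0 := by omega
    have h6 : v = u := SimpleGraph.Walk.eq_of_length_eq_zero h5
    exact G.irrefl (h6 ▸ h)
  have hq : (p.concat h).IsPath := concat_isPath hp h hv
  have := path_length_eq hconn hac _ hq
  rw [SimpleGraph.Walk.length_concat, hplen, hd] at this
  omega

lemma adj_dist (hconn : G.Connected) (hac : G.IsAcyclic) {u v : V} (h : G.Adj u v) :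
    G.dist o u + 1 = G.dist o v ∨ G.dist o v + 1 = G.dist o u := by
  have h1 : G.dist o v ≤ G.dist o u + 1 := dist_le_succ_of_adj hconn h
  have h2 : G.dist o u ≤ G.dist o v + 1 := dist_le_succ_of_adj hconn h.symm
  have h3 : G.dist o u ≠ G.dist o v := fun hd => no_lateral hconn hac h hd
  omega

lemma parent_exists (hconn : G.Connected) {v : V} (hv : G.dist o v ≠ 0) :
    ∃ u, G.Adj u v ∧ G.dist o u + 1 = G.dist o v := by
  obtain ⟨p, hp⟩ := hconn.exists_walk_length_eq_dist o v
  cases hrev : p.reverse with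
  | nil =>
    exfalso
    have := congrArg SimpleGraph.Walk.length hrev
    rw [SimpleGraph.Walk.length_reverse] at this
    simp at this
    rw [show p.length = 0 by simpa using this] at hp
    exact hv hp.symm
  | cons hadj q =>
    rename_i u
    refine ⟨u, hadj.symm, ?_⟩
    have hlen : q.length + 1 = G.dist o v := by
      have := congrArg SimpleGraph.Walk.length hrev
      rw [SimpleGraph.Walk.length_reverse] at this
      simp at this
      omega
    have hdu : G.dist o u ≤ q.length := by
      have := G.dist_le q.reverse
      rwa [SimpleGraph.Walk.length_reverse] at this
    have := dist_le_succ_of_adj (o := o) hconn hadj.symm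
    omega

lemma parent_unique (hconn : G.Connected) (hac : G.IsAcyclic) {u₁ u₂ v : V}
    (h₁ : G.Adj u₁ v) (hd₁ : G.dist o u₁ + 1 = G.dist o v)
    (h₂ : G.Adj u₂ v) (hd₂ : G.dist o u₂ + 1 = G.dist o v) : u₁ = u₂ := by
  have htree : G.IsTree := ⟨hconn, hac⟩
  have key : ∀ (u : V) (h : G.Adj u v), G.dist o u + 1 = G.dist o v →
      ∃ (p : G.Walk o u), (p.concat h).IsPath := by
    intro u h hd
    obtain ⟨p0, hp0⟩ := hconn.exists_walk_length_eq_dist o u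
    set p := p0.bypass
    have hp : p.IsPath := p0.bypass_isPath
    have hplen : p.length = G.dist o u := path_length_eq hconn hac p hp
    have hv : v ∉ p.support := by
      intro hv
      have h1 : (p.takeUntil v hv).length = G.dist o v :=
        path_length_eq hconn hac _ (hp.takeUntil hv)
      have h2 := SimpleGraph.Walk.length_takeUntil_le p hv
      omega
    exact ⟨p, concat_isPath hp h hv⟩
  obtain ⟨p₁, hq₁⟩ := key u₁ h₁ hd₁
  obtain ⟨p₂, hq₂⟩ := key u₂ h₂ hd₂
  obtain ⟨r, -, hr⟩ := htree.existsUnique_path o v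
  have heq : p₁.concat h₁ = p₂.concat h₂ := by rw [hr _ hq₁, hr _ hq₂]
  obtain ⟨hv, -⟩ := SimpleGraph.Walk.concat_inj heq
  exact hv

lemma par_spec (hconn : G.Connected) {v : V} (hv : G.dist o v ≠ 0) :
    G.Adj (par G o v) v ∧ G.dist o (par G o v) + 1 = G.dist o v := by
  rw [par, dif_pos (parent_exists hconn hv)]
  exact (parent_exists hconn hv).choose_spec

lemma par_eq (hconn : G.Connected) (hac : G.IsAcyclic) {u v : V}
    (h : G.Adj u v) (hd : G.dist o u + 1 = G.dist o v) : par G o v = u := by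
  have hv : G.dist o v ≠ 0 := by omega
  obtain ⟨h1, h2⟩ := par_spec (o := o) hconn hv
  exact parent_unique hconn hac h1 h2 h hd

lemma mem_ch_par (hconn : G.Connected) (hac : G.IsAcyclic) {v w : V}
    (h : w ∈ ch G o v) : par G o w = v :=
  par_eq hconn hac h.1 h.2.symm

end Tree

section Pick

lemma exists_pick (s t : Set V) (ds dt : V) :
    ∃ gh : (V → V) × (V → V),
      s.Finite → t.Finite → s.ncard = t.ncard →
        ((∀ w ∈ s, gh.1 w ∈ t) ∧ (∀ w ∈ t, gh.2 w ∈ s) ∧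
         (∀ w ∈ s, gh.2 (gh.1 w) = w) ∧ (∀ w ∈ t, gh.1 (gh.2 w) = w) ∧
         (ds ∈ s → dt ∈ t → gh.1 ds = dt)) := by
  classical
  by_cases hfin : s.Finite ∧ t.Finite ∧ s.ncard = t.ncard
  · obtain ⟨hs, ht, hcard⟩ := hfin
    haveI := hs.fintype
    haveI := ht.fintype
    have hc : Fintype.card s = Fintype.card t := by
      rw [← Nat.card_coe_set_eq, ← Nat.card_coe_set_eq] at hcard
      simpa [Nat.card_eq_fintype_card] using hcard
    have key : ∀ e : s ≃ t, ∃ gh : (V → V) × (V → V),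
        ((∀ w ∈ s, gh.1 w ∈ t) ∧ (∀ w ∈ t, gh.2 w ∈ s) ∧
         (∀ w ∈ s, gh.2 (gh.1 w) = w) ∧ (∀ w ∈ t, gh.1 (gh.2 w) = w) ∧
         (∀ a : s, ∀ b : t, e a = b → gh.1 a = b)) := by
      intro e
      refine ⟨⟨fun w => if hw : w ∈ s then (e ⟨w, hw⟩ : V) else w,
              fun w => if hw : w ∈ t then (e.symm ⟨w, hw⟩ : V) else w⟩,
              ?_, ?_, ?_, ?_, ?_⟩
      · intro w hw; simp only [dif_pos hw]; exact (e ⟨w, hw⟩).2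
      · intro w hw; simp only [dif_pos hw]; exact (e.symm ⟨w, hw⟩).2
      · intro w hw
        simp only [dif_pos hw, dif_pos (e ⟨w, hw⟩).2, Subtype.coe_eta,
          Equiv.symm_apply_apply]
      · intro w hw
        simp only [dif_pos hw, dif_pos (e.symm ⟨w, hw⟩).2, Subtype.coe_eta,
          Equiv.apply_symm_apply]
      · intro a b hab
        simp only [dif_pos a.2, Subtype.coe_eta, hab]
    by_cases hd : ds ∈ s ∧ dt ∈ t
    · obtain ⟨hds, hdt⟩ := hd
      set e0 : s ≃ t := Fintype.equivOfCardEq hc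
      obtain ⟨gh, h1, h2, h3, h4, h5⟩ :=
        key (e0.trans (Equiv.swap (e0 ⟨ds, hds⟩) ⟨dt, hdt⟩))
      refine ⟨gh, fun _ _ _ => ⟨h1, h2, h3, h4, fun _ _ => ?_⟩⟩
      exact h5 ⟨ds, hds⟩ ⟨dt, hdt⟩ (by simp [Equiv.trans_apply])
    · obtain ⟨gh, h1, h2, h3, h4, -⟩ := key (Fintype.equivOfCardEq hc)
      exact ⟨gh, fun _ _ _ => ⟨h1, h2, h3, h4,
        fun hds hdt => absurd ⟨hds, hdt⟩ hd⟩⟩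
  · exact ⟨⟨id, id⟩, fun hs ht hc => absurd ⟨hs, ht, hc⟩ hfin⟩

noncomputable def Epick (s t : Set V) (ds dt : V) : (V → V) × (V → V) :=
  (exists_pick s t ds dt).choose

lemma Epick_spec (s t : Set V) (ds dt : V) (hs : s.Finite) (ht : t.Finite)
    (hcard : s.ncard = t.ncard) :
    (∀ w ∈ s, (Epick s t ds dt).1 w ∈ t) ∧ (∀ w ∈ t, (Epick s t ds dt).2 w ∈ s) ∧
    (∀ w ∈ s, (Epick s t ds dt).2 ((Epick s t ds dt).1 w) = w) ∧
    (∀ w ∈ t, (Epick s t ds dt).1 ((Epick s t ds dt).2 w) = w) ∧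
    (ds ∈ s → dt ∈ t → (Epick s t ds dt).1 ds = dt) :=
  (exists_pick s t ds dt).choose_spec hs ht hcard

noncomputable def Efun [LinearOrder V] (G : SimpleGraph V) (o : V) (d : V → V)
    (u u' : V) : V → V :=
  if u ≤ u' then (Epick (ch G o u) (ch G o u') (d u) (d u')).1
  else (Epick (ch G o u') (ch G o u) (d u') (d u)).2

variable [LinearOrder V] {G : SimpleGraph V} {o : V} {d : V → V} {u u' : V}

lemma Efun_mem (hu : (ch G o u).Finite) (hu' : (ch G o u').Finite)
    (hcard : (ch G o u).ncard = (ch G o u').ncard) :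
    ∀ w ∈ ch G o u, Efun G o d u u' w ∈ ch G o u' := by
  intro w hw
  rw [Efun]
  by_cases hle : u ≤ u'
  · rw [if_pos hle]
    exact (Epick_spec _ _ _ _ hu hu' hcard).1 w hw
  · rw [if_neg hle]
    exact (Epick_spec _ _ _ _ hu' hu hcard.symm).2.1 w hw

lemma Efun_inv (hne : u ≠ u') (hu : (ch G o u).Finite) (hu' : (ch G o u').Finite)
    (hcard : (ch G o u).ncard = (ch G o u').ncard) :
    ∀ w ∈ ch G o u, Efun G o d u' u (Efun G o d u u' w) = w := by
  intro w hw
  by_cases hle : u ≤ u'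
  · have hle' : ¬ u' ≤ u := fun h => hne (le_antisymm hle h)
    rw [Efun, Efun, if_pos hle, if_neg hle']
    exact (Epick_spec _ _ _ _ hu hu' hcard).2.2.1 w hw
  · have hle' : u' ≤ u := le_of_not_ge hle
    rw [Efun, Efun, if_neg hle, if_pos hle']
    exact (Epick_spec _ _ _ _ hu' hu hcard.symm).2.2.2.1 w hw

lemma Efun_des (hu : (ch G o u).Finite) (hu' : (ch G o u').Finite)
    (hcard : (ch G o u).ncard = (ch G o u').ncard)
    (hds : d u ∈ ch G o u) (hdt : d u' ∈ ch G o u') :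
    Efun G o d u u' (d u) = d u' := by
  by_cases hle : u ≤ u'
  · rw [Efun, if_pos hle]
    exact (Epick_spec _ _ _ _ hu hu' hcard).2.2.2.2 hds hdt
  · rw [Efun, if_neg hle]
    have s5 := (Epick_spec (ch G o u') (ch G o u) (d u') (d u) hu' hu
      hcard.symm).2.2.2.2 hdt hds
    have s3 := (Epick_spec (ch G o u') (ch G o u) (d u') (d u) hu' hu
      hcard.symm).2.2.1 (d u') hdt
    rw [s5] at s3
    exact s3

end Pick




lemma exists_swap (G : SimpleGraph V) (o : V) (hconn : G.Connected) (hac : G.IsAcyclic)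
    (hlf : ∀ v : V, (G.neighborSet v).Finite) (k : ℕ → ℕ)
    (hbr : ∀ x : V, (ch G o x).ncard = k (G.dist o x + 1))
    (a b : ℕ → V) (n m : ℕ) (hmn : m < n)
    (haS : ∀ j ≤ n, G.dist o (a j) = j) (hbS : ∀ j ≤ n, G.dist o (b j) = j)
    (haC : ∀ j < n, G.Adj (a j) (a (j+1))) (hbC : ∀ j < n, G.Adj (b j) (b (j+1)))
    (heqm : a m = b m) (hne : ∀ j, m < j → j ≤ n → a j ≠ b j) :
    ∃ F : V → V, (∀ v, F (F v) = v) ∧ (∀ v, G.dist o (F v) = G.dist o v) ∧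
      (∀ u v, G.Adj u v → G.Adj (F u) (F v)) ∧ F (a n) = b n ∧ F (b n) = a n ∧
      (∀ v, G.dist o v ≤ m → F v = v) := by
  classical
  letI : LinearOrder V := IsWellOrder.linearOrder WellOrderingRel
  have chFin : ∀ v : V, (ch G o v).Finite := fun v =>
    (hlf v).subset (fun w hw => hw.1)
  have chCard : ∀ u u' : V, G.dist o u = G.dist o u' →
      (ch G o u).ncard = (ch G o u').ncard := by
    intro u u' h; rw [hbr u, hbr u', h]
  have haMem : ∀ j, j + 1 ≤ n → a (j+1) ∈ ch G o (a j) := by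
    intro j hj
    exact ⟨haC j (by omega), by rw [haS (j+1) hj, haS j (by omega)]⟩
  have hbMem : ∀ j, j + 1 ≤ n → b (j+1) ∈ ch G o (b j) := by
    intro j hj
    exact ⟨hbC j (by omega), by rw [hbS (j+1) hj, hbS j (by omega)]⟩
  -- designated child function
  set d : V → V := fun u =>
    if u = a (G.dist o u) then a (G.dist o u + 1)
    else if u = b (G.dist o u) then b (G.dist o u + 1) else u with hd
  set E : V → V → V → V := Efun G o d with hE
  -- level maps
  set seq : ℕ → V → V := fun t => Nat.rec (⇑(Equiv.swap (a (m+1)) (b (m+1))))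
    (fun _ σ v => if σ (par G o v) = par G o v then v
                  else E (par G o v) (σ (par G o v)) v) t with hseq
  have hseq0 : ∀ v, seq 0 v = Equiv.swap (a (m+1)) (b (m+1)) v := fun _ => rfl
  have hseqS : ∀ t v, seq (t+1) v = if seq t (par G o v) = par G o v then v
      else E (par G o v) (seq t (par G o v)) v := fun t v => rfl
  have hm1 : m + 1 ≤ n := hmn
  have ha' := haS (m+1) hm1
  have hb' := hbS (m+1) hm1
  -- the invariant
  have Inv : ∀ t, (∀ v, G.dist o v = m+1+t → G.dist o (seq t v) = m+1+t) ∧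
      (∀ v, G.dist o v = m+1+t → seq t (seq t v) = v) ∧
      (m+1+t ≤ n → seq t (a (m+1+t)) = b (m+1+t) ∧ seq t (b (m+1+t)) = a (m+1+t)) := by
    intro t
    induction t with
    | zero =>
      refine ⟨?_, ?_, ?_⟩
      · intro v hv
        rw [hseq0, Equiv.swap_apply_def]
        split_ifs with h1 h2
        · rw [hb']
        · rw [ha']
        · exact hv
      · intro v hv
        rw [hseq0, hseq0]
        exact Equiv.swap_apply_self _ _ v
      · intro h
        constructor
        · rw [hseq0]; exact Equiv.swap_apply_left _ _
        · rw [hseq0]; exact Equiv.swap_apply_right _ _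
    | succ t ih =>
      obtain ⟨ihA, ihB, ihC⟩ := ih
      have hpf : ∀ v, G.dist o v = m+1+(t+1) →
          G.Adj (par G o v) v ∧ G.dist o (par G o v) = m+1+t ∧
            v ∈ ch G o (par G o v) := by
        intro v hv
        have h0 : G.dist o v ≠ 0 := by omega
        obtain ⟨h1, h2⟩ := par_spec hconn h0
        exact ⟨h1, by omega, ⟨h1, by omega⟩⟩
      -- in the moved case, the new value lands in the children of the partner
      have key : ∀ v, G.dist o v = m+1+(t+1) → seq t (par G o v) ≠ par G o v →
          seq (t+1) v ∈ ch G o (seq t (par G o v)) := by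
        intro v hv hne'
        obtain ⟨h1, h2, h3⟩ := hpf v hv
        rw [hseqS, if_neg hne']
        have hd' : G.dist o (seq t (par G o v)) = m+1+t := ihA _ h2
        exact Efun_mem (chFin _) (chFin _) (chCard _ _ (by omega)) v h3
      refine ⟨?_, ?_, ?_⟩
      · intro v hv
        by_cases hfix : seq t (par G o v) = par G o v
        · rw [hseqS, if_pos hfix]; exact hv
        · have := (key v hv hfix).2
          have hd' : G.dist o (seq t (par G o v)) = m+1+t := ihA _ (hpf v hv).2.1
          omega
      · intro v hv
        by_cases hfix : seq t (par G o v) = par G o v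
        · have h1 : seq (t+1) v = v := by rw [hseqS t v, if_pos hfix]
          rw [h1]; exact h1
        · obtain ⟨h1, h2, h3⟩ := hpf v hv
          have hmem := key v hv hfix
          have hd' : G.dist o (seq t (par G o v)) = m+1+t := ihA _ h2
          have hpar' : par G o (seq (t+1) v) = seq t (par G o v) :=
            mem_ch_par hconn hac hmem
          have hfix2 : seq t (par G o (seq (t+1) v)) ≠ par G o (seq (t+1) v) := by
            rw [hpar', ihB _ h2]
            exact fun hcon => hfix hcon.symm
          rw [hseqS t (seq (t+1) v), if_neg hfix2, hpar', ihB _ h2]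
          have hstep : seq (t+1) v = E (par G o v) (seq t (par G o v)) v := by
            rw [hseqS, if_neg hfix]
          rw [hstep, hE]
          exact Efun_inv (fun hcon => hfix hcon.symm) (chFin _) (chFin _)
            (chCard _ _ (by omega)) v h3
      · intro hle
        have hja := haS (m+1+(t+1)) hle
        have hjb := hbS (m+1+(t+1)) hle
        have hpa : par G o (a (m+1+(t+1))) = a (m+1+t) := by
          apply par_eq hconn hac (haC (m+1+t) (by omega))
          rw [haS (m+1+t) (by omega)]
          rw [show m+1+t+1 = m+1+(t+1) from by omega, hja]
        have hpb : par G o (b (m+1+(t+1))) = b (m+1+t) := by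
          apply par_eq hconn hac (hbC (m+1+t) (by omega))
          rw [hbS (m+1+t) (by omega)]
          rw [show m+1+t+1 = m+1+(t+1) from by omega, hjb]
        obtain ⟨hCa, hCb⟩ := ihC (by omega)
        have hab : a (m+1+t) ≠ b (m+1+t) := hne (m+1+t) (by omega) (by omega)
        have hdista := haS (m+1+t) (by omega)
        have hdistb := hbS (m+1+t) (by omega)
        have hda : d (a (m+1+t)) = a (m+1+t+1) := by
          simp only [hd, hdista]
          simp
        have hdb : d (b (m+1+t)) = b (m+1+t+1) := by
          simp only [hd, hdistb]
          rw [if_neg (fun hcon => hab hcon.symm)]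
          simp
        constructor
        · rw [hseqS, hpa, hCa, if_neg hab.symm]
          have := Efun_des (G := G) (o := o) (d := d) (chFin (a (m+1+t)))
            (chFin (b (m+1+t)))
            (chCard _ _ (by rw [haS (m+1+t) (by omega), hbS (m+1+t) (by omega)]))
            (by rw [hda]; exact haMem (m+1+t) (by omega))
            (by rw [hdb]; exact hbMem (m+1+t) (by omega))
          rw [hda, hdb] at this
          rw [show m+1+(t+1) = m+1+t+1 from by omega]
          exact this
        · rw [hseqS, hpb, hCb, if_neg hab]
          have := Efun_des (G := G) (o := o) (d := d) (chFin (b (m+1+t)))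
            (chFin (a (m+1+t)))
            (chCard _ _ (by rw [haS (m+1+t) (by omega), hbS (m+1+t) (by omega)]))
            (by rw [hdb]; exact hbMem (m+1+t) (by omega))
            (by rw [hda]; exact haMem (m+1+t) (by omega))
          rw [hda, hdb] at this
          rw [show m+1+(t+1) = m+1+t+1 from by omega]
          exact this
  -- the global map
  set F : V → V := fun v => if G.dist o v ≤ m then v
    else seq (G.dist o v - (m+1)) v with hF
  have hF_low : ∀ v, G.dist o v ≤ m → F v = v := by
    intro v hv; rw [hF]; simp only [if_pos hv]
  have hF_hi : ∀ v t, G.dist o v = m+1+t → F v = seq t v := by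
    intro v t hv
    rw [hF]
    simp only [if_neg (by omega : ¬ G.dist o v ≤ m)]
    congr 1
    omega
  have hdistF : ∀ v, G.dist o (F v) = G.dist o v := by
    intro v
    by_cases hv : G.dist o v ≤ m
    · rw [hF_low v hv]
    · have ht : G.dist o v = m+1+(G.dist o v - (m+1)) := by omega
      rw [hF_hi v _ ht]
      rw [(Inv _).1 v ht]
      omega
  have hinvF : ∀ v, F (F v) = v := by
    intro v
    by_cases hv : G.dist o v ≤ m
    · rw [hF_low v hv, hF_low v hv]
    · have ht : G.dist o v = m+1+(G.dist o v - (m+1)) := by omega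
      rw [hF_hi v _ ht]
      have h2 : G.dist o (seq (G.dist o v - (m+1)) v) = m+1+(G.dist o v - (m+1)) :=
        (Inv _).1 v ht
      rw [hF_hi _ _ h2]
      exact (Inv _).2.1 v ht
  have hparF : ∀ v, G.dist o v ≠ 0 → F (par G o v) = par G o (F v) := by
    intro v hv0
    obtain ⟨hadjp, hdp⟩ := par_spec (o := o) hconn hv0
    by_cases hv : G.dist o v ≤ m
    · rw [hF_low v hv, hF_low _ (by omega)]
    · by_cases hv1 : G.dist o v = m + 1
      · have hFp : F (par G o v) = par G o v := hF_low _ (by omega)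
        have hFv : F v = Equiv.swap (a (m+1)) (b (m+1)) v := by
          rw [hF_hi v 0 (by omega), hseq0]
        have h1 : par G o (a (m+1)) = a m := by
          apply par_eq hconn hac (haC m hmn)
          rw [haS m (by omega), ha']
        have h2 : par G o (b (m+1)) = b m := by
          apply par_eq hconn hac (hbC m hmn)
          rw [hbS m (by omega), hb']
        by_cases hva : v = a (m+1)
        · subst hva
          rw [hFv, Equiv.swap_apply_left, hFp, h1, h2, heqm]
        · by_cases hvb : v = b (m+1)
          · subst hvb
            rw [hFv, Equiv.swap_apply_right, hFp, h1, h2, heqm]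
          · rw [hFv, Equiv.swap_apply_of_ne_of_ne hva hvb, hFp]
      · -- G.dist o v = m+1+(t+1)
        obtain ⟨t, ht⟩ : ∃ t, G.dist o v = m+1+(t+1) := ⟨G.dist o v - (m+2), by omega⟩
        have hFp : F (par G o v) = seq t (par G o v) := hF_hi _ t (by omega)
        have hFv : F v = seq (t+1) v := hF_hi v (t+1) ht
        by_cases hfix : seq t (par G o v) = par G o v
        · rw [hFv, hseqS, if_pos hfix, hFp, hfix]
        · have hmem : seq (t+1) v ∈ ch G o (seq t (par G o v)) := by
            rw [hseqS, if_neg hfix]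
            have h3 : v ∈ ch G o (par G o v) := ⟨hadjp, by omega⟩
            have hd' : G.dist o (seq t (par G o v)) = m+1+t :=
              (Inv t).1 _ (by omega)
            exact Efun_mem (chFin _) (chFin _) (chCard _ _ (by omega)) v h3
          rw [hFv, hFp]
          exact (mem_ch_par hconn hac hmem).symm
  have hadjF : ∀ u v, G.Adj u v → G.Adj (F u) (F v) := by
    have hsym : ∀ u v, G.Adj u v → G.dist o u + 1 = G.dist o v → G.Adj (F u) (F v) := by
      intro u v huv hdd
      have hu : par G o v = u := par_eq hconn hac huv hdd
      have hv0 : G.dist o v ≠ 0 := by omega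
      have h1 : F u = par G o (F v) := by rw [← hu]; exact hparF v hv0
      have h2 : G.dist o (F v) ≠ 0 := by rw [hdistF]; omega
      have := (par_spec (o := o) hconn h2).1
      rwa [← h1] at this
    intro u v huv
    rcases adj_dist hconn hac huv with h | h
    · exact hsym u v huv h
    · exact (hsym v u huv.symm h).symm
  refine ⟨F, hinvF, hdistF, hadjF, ?_, ?_, hF_low⟩
  · obtain ⟨t, ht⟩ : ∃ t, n = m+1+t := ⟨n - (m+1), by omega⟩
    rw [hF_hi (a n) t (by rw [haS n le_rfl]; omega)]
    have := ((Inv t).2.2 (by omega)).1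
    rw [← ht] at this
    exact this
  · obtain ⟨t, ht⟩ : ∃ t, n = m+1+t := ⟨n - (m+1), by omega⟩
    rw [hF_hi (b n) t (by rw [hbS n le_rfl]; omega)]
    have := ((Inv t).2.2 (by omega)).2
    rw [← ht] at this
    exact this


lemma anc_dist {G : SimpleGraph V} {o : V} (hconn : G.Connected) {x : V} {nn : ℕ}
    (hx : G.dist o x = nn) : ∀ c, c ≤ nn → G.dist o ((par G o)^[c] x) = nn - c := by
  intro c
  induction c with
  | zero => intro _; simpa using hx
  | succ c ih =>
    intro hc
    rw [Function.iterate_succ_apply']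
    have hc' := ih (by omega)
    have hne0 : G.dist o ((par G o)^[c] x) ≠ 0 := by omega
    have := (par_spec hconn hne0).2
    omega

lemma exists_swap_pair (G : SimpleGraph V) (o : V) (hconn : G.Connected)
    (hac : G.IsAcyclic) (hlf : ∀ v : V, (G.neighborSet v).Finite) (k : ℕ → ℕ)
    (hbr : ∀ x : V, (ch G o x).ncard = k (G.dist o x + 1))
    {x y : V} {n : ℕ} (hx : G.dist o x = n) (hy : G.dist o y = n) (hxy : x ≠ y) :
    ∃ F : V → V, (∀ v, F (F v) = v) ∧ (∀ v, G.dist o (F v) = G.dist o v) ∧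
      (∀ u v, G.Adj u v → G.Adj (F u) (F v)) ∧ F x = y ∧ F y = x ∧ F o = o ∧
      (par G o x = par G o y → ∀ v, G.dist o v ≤ n - 1 → F v = v) := by
  classical
  have hn1 : 1 ≤ n := by
    rcases Nat.eq_zero_or_pos n with h | h
    · exfalso
      apply hxy
      rw [dist0 hconn (by omega : G.dist o x = 0),
        dist0 hconn (by omega : G.dist o y = 0)]
    · exact h
  set a : ℕ → V := fun j => (par G o)^[n - j] x with haDef
  set b : ℕ → V := fun j => (par G o)^[n - j] y with hbDef
  have haS : ∀ j, j ≤ n → G.dist o (a j) = j := by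
    intro j hj
    have h1 := anc_dist hconn hx (n - j) (by omega)
    have h2 : n - (n - j) = j := by omega
    rw [h2] at h1
    exact h1
  have hbS : ∀ j, j ≤ n → G.dist o (b j) = j := by
    intro j hj
    have h1 := anc_dist hconn hy (n - j) (by omega)
    have h2 : n - (n - j) = j := by omega
    rw [h2] at h1
    exact h1
  have hstep : ∀ (z : V) (j : ℕ), j < n →
      (par G o)^[n - j] z = par G o ((par G o)^[n - (j+1)] z) := by
    intro z j hj
    rw [← Function.iterate_succ_apply' (par G o) (n - (j+1)) z]
    congr 1
    omega
  have haC : ∀ j, j < n → G.Adj (a j) (a (j+1)) := by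
    intro j hj
    have hne0 : G.dist o (a (j+1)) ≠ 0 := by rw [haS (j+1) (by omega)]; omega
    have := (par_spec hconn hne0).1
    have hs : a j = par G o (a (j+1)) := hstep x j hj
    rw [hs]
    exact this
  have hbC : ∀ j, j < n → G.Adj (b j) (b (j+1)) := by
    intro j hj
    have hne0 : G.dist o (b (j+1)) ≠ 0 := by rw [hbS (j+1) (by omega)]; omega
    have := (par_spec hconn hne0).1
    have hs : b j = par G o (b (j+1)) := hstep y j hj
    rw [hs]
    exact this
  have han : a n = x := by simp [haDef, Nat.sub_self]
  have hbn : b n = y := by simp [hbDef, Nat.sub_self]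
  have hP0 : a 0 = b 0 := by
    rw [dist0 hconn (haS 0 (by omega)), dist0 hconn (hbS 0 (by omega))]
  set m : ℕ := Nat.findGreatest (fun j => a j = b j) n with hmDef
  have hm : a m = b m := Nat.findGreatest_spec (P := fun j => a j = b j) (Nat.zero_le n) hP0
  have hmle : m ≤ n := Nat.findGreatest_le n
  have hmn : m < n := by
    rcases Nat.lt_or_ge m n with h | h
    · exact h
    · exfalso
      have : m = n := by omega
      rw [this, han, hbn] at hm
      exact hxy hm
  have hne : ∀ j, m < j → j ≤ n → a j ≠ b j := by
    intro j h1 h2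
    exact Nat.findGreatest_is_greatest (P := fun j => a j = b j) h1 h2
  obtain ⟨F, hFinv, hFdist, hFadj, hFa, hFb, hFlow⟩ :=
    exists_swap G o hconn hac hlf k hbr a b n m hmn haS hbS haC hbC hm hne
  refine ⟨F, hFinv, hFdist, hFadj, by rw [← han, ← hbn]; exact hFa,
    by rw [← han, ← hbn]; exact hFb, hFlow o (by rw [SimpleGraph.dist_self]; omega), ?_⟩
  intro hpar v hv
  have hP : a (n-1) = b (n-1) := by
    have h1 : n - (n - 1) = 1 := by omega
    show (par G o)^[n - (n-1)] x = (par G o)^[n - (n-1)] y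
    rw [h1]
    simpa using hpar
  have hge : n - 1 ≤ m := Nat.le_findGreatest (P := fun j => a j = b j) (by omega) hP
  exact hFlow v (by omega)

end Stmt7Aux


/-- a spherically symmetric tree with some spheres completed is
family preserving. -/
theorem stmt7 {V : Type*} (R Rp : RootedGraph V) (k : ℕ → ℕ) (γ : ℕ → Bool)
    (htree : R.G.IsAcyclic)
    (hbranch : ∀ n : ℕ, ∀ x ∈ R.sphere n,
      {w : V | R.G.Adj x w ∧ w ∈ R.sphere (n + 1)}.ncard = k (n + 1))
    (hroot : Rp.o = R.o)
    (hadj : ∀ x y : V, Rp.G.Adj x y ↔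
      (R.G.Adj x y ∨ (x ≠ y ∧ ∃ n : ℕ, 1 ≤ n ∧ γ n = true ∧
        x ∈ R.sphere n ∧ y ∈ R.sphere n))) :
    Rp.FamilyPreserving := by
  classical
  open Stmt7Aux in
  set o : V := R.o with ho
  have hconn : R.G.Connected := R.connected
  have hac : R.G.IsAcyclic := htree
  have hlf : ∀ v : V, (R.G.neighborSet v).Finite := R.locFin
  have hbr : ∀ x : V, (Stmt7Aux.ch R.G o x).ncard = k (R.G.dist o x + 1) := by
    intro x
    have hx : x ∈ R.sphere (R.G.dist o x) := rfl
    have := hbranch (R.G.dist o x) x hx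
    have hset : {w : V | R.G.Adj x w ∧ w ∈ R.sphere (R.G.dist o x + 1)} =
        Stmt7Aux.ch R.G o x := rfl
    rwa [hset] at this
  -- distances in Rp and R agree
  have hdist_eq : ∀ v, Rp.G.dist Rp.o v = R.G.dist o v := by
    intro v
    refine le_antisymm ?_ ?_
    · obtain ⟨p, hp⟩ := hconn.exists_walk_length_eq_dist o v
      have hle' : R.G ≤ Rp.G := fun {x y} h => (hadj x y).2 (Or.inl h)
      have := Rp.G.dist_le (p.mapLe hle')
      rw [SimpleGraph.Walk.length_map] at this
      rw [hroot]
      omega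
    · have claim : ∀ (u w : V) (p : Rp.G.Walk u w),
          R.G.dist o w ≤ R.G.dist o u + p.length := by
        intro u w p
        induction p with
        | nil => simp
        | @cons s t w h q ih =>
          rcases (hadj s t).1 h with h' | ⟨-, nn, -, -, h1, h2⟩
          · have := Stmt7Aux.dist_le_succ_of_adj (o := o) hconn h'
            simp only [SimpleGraph.Walk.length_cons]
            omega
          · have e1 : R.G.dist o s = nn := h1
            have e2 : R.G.dist o t = nn := h2
            simp only [SimpleGraph.Walk.length_cons]
            omega
      obtain ⟨p, hp⟩ := Rp.connected.exists_walk_length_eq_dist Rp.o v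
      have h1 := claim Rp.o v p
      have h0 : R.G.dist o Rp.o = 0 := by rw [hroot]; exact SimpleGraph.dist_self
      omega
  have hsph : ∀ (v : V) (nn : ℕ), v ∈ Rp.sphere nn ↔ R.G.dist o v = nn := by
    intro v nn
    have : v ∈ Rp.sphere nn ↔ Rp.G.dist Rp.o v = nn := Iff.rfl
    rw [this, hdist_eq]
  -- iso builder from a root / distance preserving involution
  have mkIso : ∀ F : V → V, (∀ v, F (F v) = v) →
      (∀ v, R.G.dist o (F v) = R.G.dist o v) →
      (∀ u v, R.G.Adj u v → R.G.Adj (F u) (F v)) →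
      ∃ τ : Rp.G ≃g Rp.G, ∀ v, τ v = F v := by
    intro F hinv hdist hadjF
    have hinj : Function.Injective F := Function.LeftInverse.injective hinv
    refine ⟨⟨⟨F, F, hinv, hinv⟩, ?_⟩, fun v => rfl⟩
    intro u v
    show Rp.G.Adj (F u) (F v) ↔ Rp.G.Adj u v
    rw [hadj, hadj]
    constructor
    · rintro (h | ⟨hne, nn, h1, h2, h3, h4⟩)
      · left
        have := hadjF _ _ h
        rwa [hinv, hinv] at this
      · right
        refine ⟨fun hc => hne (by rw [hc]), nn, h1, h2, ?_, ?_⟩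
        · show R.G.dist o u = nn
          have h5 : R.G.dist o (F u) = nn := h3
          rwa [hdist] at h5
        · show R.G.dist o v = nn
          have h5 : R.G.dist o (F v) = nn := h4
          rwa [hdist] at h5
    · rintro (h | ⟨hne, nn, h1, h2, h3, h4⟩)
      · left; exact hadjF _ _ h
      · right
        refine ⟨fun hc => hne (hinj hc), nn, h1, h2, ?_, ?_⟩
        · show R.G.dist o (F u) = nn
          rw [hdist]; exact h3
        · show R.G.dist o (F v) = nn
          rw [hdist]; exact h4
  have idIso : ∃ τ : Rp.G ≃g Rp.G, ∀ v, τ v = v :=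
    mkIso id (fun _ => rfl) (fun _ => rfl) (fun _ _ h => h)
  refine ⟨?_, ?_, ?_⟩
  -- forward brothers
  · intro n x hx y hy z hz hxz hyz
    have hxd : R.G.dist o x = n := (hsph x n).1 hx
    have hyd : R.G.dist o y = n := (hsph y n).1 hy
    have hzd : R.G.dist o z = n + 1 := (hsph z (n+1)).1 hz
    have hRxz : R.G.Adj x z := by
      rcases (hadj x z).1 hxz with h | ⟨-, nn, -, -, h1, h2⟩
      · exact h
      · exfalso
        have e1 : R.G.dist o x = nn := h1
        have e2 : R.G.dist o z = nn := h2
        omega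
    have hRyz : R.G.Adj y z := by
      rcases (hadj y z).1 hyz with h | ⟨-, nn, -, -, h1, h2⟩
      · exact h
      · exfalso
        have e1 : R.G.dist o y = nn := h1
        have e2 : R.G.dist o z = nn := h2
        omega
    have hxy : x = y :=
      Stmt7Aux.parent_unique (o := o) hconn hac hRxz (by omega) hRyz (by omega)
    obtain ⟨τ, hτ⟩ := idIso
    exact ⟨τ, hτ _, by rw [hτ, hxy], fun j hj v hv => hτ v⟩
  -- backward brothers
  · intro n hn x hx y hy z hz hxz hyz
    have hxd : R.G.dist o x = n := (hsph x n).1 hx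
    have hyd : R.G.dist o y = n := (hsph y n).1 hy
    have hzd : R.G.dist o z = n - 1 := (hsph z (n-1)).1 hz
    by_cases hxy : x = y
    · obtain ⟨τ, hτ⟩ := idIso
      exact ⟨τ, hτ _, by rw [hτ, hxy], fun j hj1 hj2 v hv => hτ v⟩
    · have hRxz : R.G.Adj x z := by
        rcases (hadj x z).1 hxz with h | ⟨-, nn, -, -, h1, h2⟩
        · exact h
        · exfalso
          have e1 : R.G.dist o x = nn := h1
          have e2 : R.G.dist o z = nn := h2
          omega
      have hRyz : R.G.Adj y z := by
        rcases (hadj y z).1 hyz with h | ⟨-, nn, -, -, h1, h2⟩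
        · exact h
        · exfalso
          have e1 : R.G.dist o y = nn := h1
          have e2 : R.G.dist o z = nn := h2
          omega
      have hpx : Stmt7Aux.par R.G o x = z :=
        Stmt7Aux.par_eq hconn hac hRxz.symm (by omega)
      have hpy : Stmt7Aux.par R.G o y = z :=
        Stmt7Aux.par_eq hconn hac hRyz.symm (by omega)
      obtain ⟨F, hFinv, hFdist, hFadj, hFx, hFy, hFo, hFfix⟩ :=
        Stmt7Aux.exists_swap_pair R.G o hconn hac hlf k hbr hxd hyd hxy
      obtain ⟨τ, hτ⟩ := mkIso F hFinv hFdist hFadj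
      refine ⟨τ, ?_, by rw [hτ]; exact hFx, ?_⟩
      · rw [hτ, hroot]; exact hFo
      · intro j hj1 hj2 v hv
        rw [hτ]
        have hvd : R.G.dist o v = n - j := (hsph v (n-j)).1 hv
        exact hFfix (by rw [hpx, hpy]) v (by omega)
  -- brothers within a sphere
  · intro n x hx y hy hxy
    have hxd : R.G.dist o x = n := (hsph x n).1 hx
    have hyd : R.G.dist o y = n := (hsph y n).1 hy
    have hne : x ≠ y := by
      rcases (hadj x y).1 hxy with h | ⟨hne, -⟩
      · exact absurd (hxd.trans hyd.symm) (fun hd => Stmt7Aux.no_lateral hconn hac h hd)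
      · exact hne
    obtain ⟨F, hFinv, hFdist, hFadj, hFx, hFy, hFo, -⟩ :=
      Stmt7Aux.exists_swap_pair R.G o hconn hac hlf k hbr hxd hyd hne
    obtain ⟨τ, hτ⟩ := mkIso F hFinv hFdist hFadj
    refine ⟨τ, ?_, by rw [hτ]; exact hFx, by rw [hτ]; exact hFy⟩
    rw [hτ, hroot]; exact hFo
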